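/- Let $f, g \in \mathbb{C}[X_1,\ldots,X_n]$ be such that $f = X_1 + f_2 + \cdots + f_l$ and $g = X_2 + g_2 + \cdots + g_m$, where $f_i, g_i$ are homogeneous of degree $i$. If $\deg[f,g] = 2$ (i.e., every $2\times 2$ Jacobian minor of $(f,g)$ is a constant) and $f$ does not involve the variable $X_i$ for some $i > 2$, then $g$ does not involve $X_i$ either. -/

import Mathlib

open MvPolynomial

lemma coeff_zero_pderiv' {σ : Type*} [DecidableEq σ] (j : σ) (p : MvPolynomial σ ℂ) :
    coeff 0 (pderiv j p) = coeff (Finsupp.single j 1) p := by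
  induction p using MvPolynomial.induction_on' with
  | monomial m a =>
    rw [pderiv_monomial, coeff_monomial, coeff_monomial]
    by_cases h : m = Finsupp.single j 1
    · subst h; simp
    · rw [if_neg h]
      by_cases h2 : m - Finsupp.single j 1 = 0
      · rw [if_pos h2]
        have hle : m ≤ Finsupp.single j 1 := tsub_eq_zero_iff_le.mp h2
        have hmj : m j ≤ 1 := by simpa using hle j
        have hmj0 : m j = 0 := by
          rcases Nat.le_one_iff_eq_zero_or_eq_one.mp hmj with h0 | h1
          · exact h0
          · exfalso
            apply h
            ext x
            by_cases hx : x = j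
            · subst hx; simp [h1]
            · have := hle x
              have hjx : j ≠ x := Ne.symm hx
              simp [Finsupp.single_apply, hjx] at this ⊢
              exact this
        simp [hmj0]
      · rw [if_neg h2]
  | add p q hp hq => simp [hp, hq]

lemma eq_C_of_totalDegree_zero' {σ : Type*} {R : Type*} [CommSemiring R]
    {p : MvPolynomial σ R} (h : p.totalDegree = 0) : p = C (coeff 0 p) := by
  classical
  ext m
  rw [coeff_C]
  by_cases hm : m = 0
  · subst hm; simp
  · rw [if_neg (Ne.symm hm)]
    by_contra hc
    have hmem : m ∈ p.support := mem_support_iff.mpr hc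
    obtain ⟨x, hx⟩ : ∃ x, m x ≠ 0 := by
      by_contra h'
      push_neg at h'
      exact hm (Finsupp.ext h')
    exact hx ((totalDegree_eq_zero_iff σ p).mp h m hmem x)

theorem poisson_deg_two_not_involve (n : ℕ)
    (f g : MvPolynomial (Fin (n + 3)) ℂ)
    (hf0 : homogeneousComponent 0 f = 0)
    (hf1 : homogeneousComponent 1 f = X 0)
    (hg0 : homogeneousComponent 0 g = 0)
    (hg1 : homogeneousComponent 1 g = X 1)
    (hbr : ∀ j k : Fin (n + 3),
      (pderiv j f * pderiv k g - pderiv k f * pderiv j g).totalDegree = 0)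
    (i : Fin (n + 3)) (hi0 : i ≠ 0) (hi1 : i ≠ 1)
    (hfi : pderiv i f = 0) :
    pderiv i g = 0 := by
  classical
  have key := hbr 0 i
  rw [hfi, zero_mul, sub_zero] at key
  have hC := eq_C_of_totalDegree_zero' key
  -- coeff 0 (pderiv i g) = 0
  have hcg : coeff 0 (pderiv i g) = 0 := by
    rw [coeff_zero_pderiv']
    have h1 : coeff (Finsupp.single i 1) g
        = coeff (Finsupp.single i 1) (homogeneousComponent 1 g) := by
      rw [coeff_homogeneousComponent, if_pos (by simp [Finsupp.degree_single])]
    rw [h1, hg1, coeff_X']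
    rw [if_neg]
    intro h
    exact hi1 (by simpa using (Finsupp.single_left_injective one_ne_zero) h.symm)
  -- coeff 0 (pderiv 0 f) = 1
  have hcf : coeff 0 (pderiv (0 : Fin (n + 3)) f) = 1 := by
    rw [coeff_zero_pderiv']
    have h1 : coeff (Finsupp.single (0 : Fin (n + 3)) 1) f
        = coeff (Finsupp.single (0 : Fin (n + 3)) 1) (homogeneousComponent 1 f) := by
      rw [coeff_homogeneousComponent, if_pos (by simp [Finsupp.degree_single])]
    rw [h1, hf1, coeff_X']
    exact if_pos rfl
  have hfne : pderiv (0 : Fin (n + 3)) f ≠ 0 := by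
    intro h
    rw [h] at hcf
    simp at hcf
  have hprod : pderiv (0 : Fin (n + 3)) f * pderiv i g = 0 := by
    rw [hC]
    have : coeff 0 (pderiv (0 : Fin (n + 3)) f * pderiv i g) = 0 := by
      have := congrFun constantCoeff_eq (pderiv (0 : Fin (n + 3)) f * pderiv i g)
      rw [← this, map_mul]
      rw [congrFun constantCoeff_eq (pderiv (0 : Fin (n + 3)) f),
        congrFun constantCoeff_eq (pderiv i g), hcg, mul_zero]
    rw [this, map_zero]
  rcases mul_eq_zero.mp hprod with h | h
  · exact absurd h hfne
  · exact h
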